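/- Let k ≥ 1 and let G_n = ([n], E) be a directed graph in which every node has in-degree at most k and out-degree at most k. Then for every n > 8 there exists a Boolean function f : {0,1}^n → {0,1} such that every output-stabilizing stateless protocol on G_n that computes f has label complexity L_n = log₂|Σ| ≥ n/(4k). -/

import Mathlib

/-- A stateless protocol on the directed graph with node set `Fin n` and edge set
`E`, with label space `Λ`.  `react i` maps the current labeling (of which only
the values on `i`'s incoming edges may be used, per `react_local`) together with
`i`'s input bit to a new labeling (of which only the values on `i`'s outgoing
edges are ever read) together with an output bit. -/
structure StatelessProtocol (n : ℕ) (E : Finset (Fin n × Fin n)) (Λ : Type) where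
  react : Fin n → ({e // e ∈ E} → Λ) → Bool → ({e // e ∈ E} → Λ) × Bool
  react_local : ∀ (i : Fin n) (ℓ ℓ' : {e // e ∈ E} → Λ) (x : Bool),
      (∀ e : {e // e ∈ E}, e.1.2 = i → ℓ e = ℓ' e) → react i ℓ x = react i ℓ' x

namespace StatelessProtocol

variable {n : ℕ} {E : Finset (Fin n × Fin n)} {Λ : Type}

/-- `run P x σ ℓ0 t` is the labeling after `t` time steps of the run of `P` on
input `x` from initial labeling `ℓ0`, where `σ t` is the set of nodes activated
at time step `t + 1`. -/
def run (P : StatelessProtocol n E Λ) (x : Fin n → Bool) (σ : ℕ → Finset (Fin n))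
    (ℓ0 : {e // e ∈ E} → Λ) : ℕ → {e // e ∈ E} → Λ
  | 0 => ℓ0
  | t + 1 => fun e =>
      if e.1.1 ∈ σ t then (P.react e.1.1 (run P x σ ℓ0 t) (x e.1.1)).1 e
      else run P x σ ℓ0 t e

/-- A schedule is `r`-fair if every node is activated at least once in every
window of `r` consecutive time steps. -/
def Fair (σ : ℕ → Finset (Fin n)) (r : ℕ) : Prop :=
  ∀ (i : Fin n) (t : ℕ), ∃ s, t ≤ s ∧ s < t + r ∧ i ∈ σ s

/-- A labeling is stable for input `x` if every reaction function is at a fixed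
point: each node's prescribed outgoing labels coincide with the current ones. -/
def Stable (P : StatelessProtocol n E Λ) (x : Fin n → Bool)
    (ℓ : {e // e ∈ E} → Λ) : Prop :=
  ∀ e : {e // e ∈ E}, (P.react e.1.1 ℓ (x e.1.1)).1 e = ℓ e

/-- The labeling after `t` steps of the synchronous run (all nodes activated at
every step). -/
def syncRun (P : StatelessProtocol n E Λ) (x : Fin n → Bool)
    (ℓ0 : {e // e ∈ E} → Λ) : ℕ → {e // e ∈ E} → Λ :=
  P.run x (fun _ => Finset.univ) ℓ0

/-- The outputs at time step `t` of the synchronous run (the value at time `0`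
is a dummy value). -/
def syncOut (P : StatelessProtocol n E Λ) (x : Fin n → Bool)
    (ℓ0 : {e // e ∈ E} → Λ) : ℕ → Fin n → Bool
  | 0 => fun _ => false
  | t + 1 => fun i => (P.react i (P.syncRun x ℓ0 t) (x i)).2

/-- Output stabilization under the synchronous schedule. -/
def OutputStabilizing (P : StatelessProtocol n E Λ) : Prop :=
  ∀ x ℓ0, ∃ T, ∀ t, T ≤ t → P.syncOut x ℓ0 t = P.syncOut x ℓ0 T

/-- Label stabilization under the synchronous schedule. -/
def LabelStabilizing (P : StatelessProtocol n E Λ) : Prop :=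
  ∀ x ℓ0, ∃ T, ∀ t, T ≤ t → P.syncRun x ℓ0 t = P.syncRun x ℓ0 T

/-- `P` computes `f` if on every input and from every initial labeling, every
node's output sequence converges to `f x` under the synchronous schedule. -/
def Computes (P : StatelessProtocol n E Λ) (f : (Fin n → Bool) → Bool) : Prop :=
  ∀ x ℓ0, ∃ T, ∀ t, T ≤ t → ∀ i, P.syncOut x ℓ0 t i = f x

end StatelessProtocol

open StatelessProtocol

lemma poly_bound : ∀ n : ℕ, 9 ≤ n → (n * (n + 6))^4 ≤ 2^(3*n+4) := by
  intro n hn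
  induction n, hn using Nat.le_induction with
  | base => norm_num
  | succ n hn ih =>
    have h1 : 2 * ((n+1) * ((n+1) + 6)) ≤ 3 * (n * (n + 6)) := by nlinarith
    have h2 : (2 * ((n+1) * ((n+1) + 6)))^4 ≤ (3 * (n * (n + 6)))^4 :=
      Nat.pow_le_pow_left h1 4
    have h3 : 16 * ((n+1) * ((n+1) + 6))^4 ≤ 81 * (n * (n + 6))^4 := by
      calc 16 * ((n+1) * ((n+1) + 6))^4 = (2 * ((n+1) * ((n+1) + 6)))^4 := by ring
        _ ≤ (3 * (n * (n + 6)))^4 := h2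
        _ = 81 * (n * (n + 6))^4 := by ring
    have h4 : ((n+1) * ((n+1) + 6))^4 ≤ 8 * (n * (n + 6))^4 := by
      have : 16 * ((n+1) * ((n+1) + 6))^4 ≤ 16 * (8 * (n * (n + 6))^4) := by
        calc 16 * ((n+1) * ((n+1) + 6))^4 ≤ 81 * (n * (n + 6))^4 := h3
          _ ≤ 128 * (n * (n + 6))^4 := Nat.mul_le_mul_right _ (by norm_num)
          _ = 16 * (8 * (n * (n + 6))^4) := by ring
      omega
    calc ((n+1) * ((n+1) + 6))^4 ≤ 8 * (n * (n + 6))^4 := h4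
      _ ≤ 8 * 2^(3*n+4) := by omega
      _ = 2^(3*(n+1)+4) := by ring

lemma fourth_root_lt {x y : ℕ} (h : x^4 < y^4) : x < y := by
  by_contra hc
  exact absurd (Nat.pow_le_pow_left (le_of_not_gt hc) 4) (not_le_of_gt h)

lemma num_bound {n a : ℕ} (hn : 9 ≤ n) (ha : 1 ≤ a) (h4 : a^4 < 2^n) :
    (2*a)^(2*a*n) < 2^(2^n - n) := by
  have hpoly := poly_bound n hn
  have hnn : 0 < (n * (n + 6))^4 := by positivity
  have key4 : (2*a*n*(n+6))^4 < (4 * 2^n)^4 := by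
    calc (2*a*n*(n+6))^4 = 16 * a^4 * (n*(n+6))^4 := by ring
      _ ≤ 16 * (2^n - 1) * (n*(n+6))^4 := by
          have : a^4 ≤ 2^n - 1 := by omega
          exact Nat.mul_le_mul_right _ (Nat.mul_le_mul_left _ this)
      _ < 16 * 2^n * (n*(n+6))^4 := by
          have h16 : (0:ℕ) < 2^n := Nat.pow_pos (by norm_num)
          have : 16 * (2^n - 1) < 16 * 2^n := by omega
          exact (Nat.mul_lt_mul_right hnn).2 this
      _ ≤ 16 * 2^n * 2^(3*n+4) := Nat.mul_le_mul_left _ hpoly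
      _ = (4 * 2^n)^4 := by ring
  have key : 2*a*n*(n+6) < 4 * 2^n := fourth_root_lt key4
  have hexp : 8*a*n + 2*a*n^2 + 4*n < 4 * 2^n := by nlinarith
  have hn2 : n ≤ 2^n := Nat.le_of_lt (Nat.lt_two_pow_self)
  have hexp2 : 8*a*n + 2*a*n^2 < 4 * (2^n - n) := by omega
  have hX4 : ((2*a)^(2*a*n))^4 < (2^(2^n - n))^4 := by
    calc ((2*a)^(2*a*n))^4 = 2^(8*a*n) * (a^4)^(2*a*n) := by
          rw [← pow_mul, ← pow_mul, mul_pow]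
          congr 1 <;> congr 1 <;> ring
      _ ≤ 2^(8*a*n) * (2^n)^(2*a*n) :=
          Nat.mul_le_mul_left _ (Nat.pow_le_pow_left (le_of_lt h4) _)
      _ = 2^(8*a*n + 2*a*n^2) := by rw [← pow_mul, ← pow_add]; ring_nf
      _ < 2^(4*(2^n - n)) := Nat.pow_lt_pow_right (by norm_num) hexp2
      _ = (2^(2^n - n))^4 := by rw [← pow_mul]; ring_nf
  exact fourth_root_lt hX4


section Aux

variable {n : ℕ} {E : Finset (Fin n × Fin n)}

/-- relabeling a protocol along an equivalence of label spaces -/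
def mapProtocol {Λ Λ' : Type} (eq : Λ ≃ Λ') (P : StatelessProtocol n E Λ) :
    StatelessProtocol n E Λ' where
  react i ℓ x :=
    ((fun e' => eq ((P.react i (fun e'' => eq.symm (ℓ e'')) x).1 e')),
      (P.react i (fun e'' => eq.symm (ℓ e'')) x).2)
  react_local i ℓ ℓ' x h := by
    have h2 : P.react i (fun e'' => eq.symm (ℓ e'')) x
        = P.react i (fun e'' => eq.symm (ℓ' e'')) x :=
      P.react_local i _ _ x (fun e' he => by rw [h e' he])
    simp [h2]

lemma syncRun_succ {Λ : Type} (P : StatelessProtocol n E Λ) (x : Fin n → Bool)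
    (ℓ0 : {e // e ∈ E} → Λ) (t : ℕ) :
    P.syncRun x ℓ0 (t+1) = fun e => (P.react e.1.1 (P.syncRun x ℓ0 t) (x e.1.1)).1 e := by
  funext e
  show (if e.1.1 ∈ (Finset.univ : Finset (Fin n)) then _ else _) = _
  rw [if_pos (Finset.mem_univ _)]
  rfl

lemma mapProtocol_syncRun {Λ Λ' : Type} (eq : Λ ≃ Λ') (P : StatelessProtocol n E Λ)
    (x : Fin n → Bool) (ℓ0' : {e // e ∈ E} → Λ') (t : ℕ) :
    (mapProtocol eq P).syncRun x ℓ0' t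
      = fun e => eq (P.syncRun x (fun e' => eq.symm (ℓ0' e')) t e) := by
  induction t with
  | zero => funext e; simp [syncRun, run]
  | succ t ih =>
    funext e
    show (if e.1.1 ∈ (Finset.univ : Finset (Fin n)) then _ else _) = _
    rw [if_pos (Finset.mem_univ _)]
    show ((mapProtocol eq P).react e.1.1 ((mapProtocol eq P).syncRun x ℓ0' t) (x e.1.1)).1 e = _
    rw [ih]
    show eq ((P.react e.1.1 (fun e'' => eq.symm (eq (P.syncRun x _ t e''))) (x e.1.1)).1 e) = _
    simp only [Equiv.symm_apply_apply]
    rw [syncRun_succ]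

lemma mapProtocol_computes {Λ Λ' : Type} (eq : Λ ≃ Λ') (P : StatelessProtocol n E Λ)
    (f : (Fin n → Bool) → Bool) (hP : P.Computes f) :
    (mapProtocol eq P).Computes f := by
  intro x ℓ0'
  obtain ⟨T, hT⟩ := hP x (fun e' => eq.symm (ℓ0' e'))
  refine ⟨T + 1, fun t ht i => ?_⟩
  obtain ⟨t', rfl⟩ : ∃ t', t = t' + 1 := ⟨t - 1, by omega⟩
  show ((mapProtocol eq P).react i ((mapProtocol eq P).syncRun x ℓ0' t') (x i)).2 = f x
  rw [mapProtocol_syncRun]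
  show (P.react i (fun e'' => eq.symm (eq (P.syncRun x _ t' e''))) (x i)).2 = f x
  simp only [Equiv.symm_apply_apply]
  exact hT (t' + 1) (by omega) i

end Aux

section Kernel

variable {n : ℕ} (E : Finset (Fin n × Fin n))

abbrev inT (i : Fin n) : Type := {e : {e // e ∈ E} // e.1.2 = i}
abbrev outT (i : Fin n) : Type := {e : {e // e ∈ E} // e.1.1 = i}

abbrev QT (s : ℕ) (i : Fin n) : Type :=
  ((inT E i → Fin (s+1)) × Bool) → ((outT E i → Fin (s+1)) × Bool)

variable {E} {s : ℕ}

def kerRun (q : ∀ i, QT E s i) (x : Fin n → Bool) : ℕ → ({e // e ∈ E} → Fin (s+1))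
  | 0 => fun _ => 0
  | t+1 => fun e => (q e.1.1 ((fun e' => kerRun q x t e'.1), x e.1.1)).1 ⟨e, rfl⟩

def kerOut (i₀ : Fin n) (q : ∀ i, QT E s i) (x : Fin n → Bool) (t : ℕ) : Bool :=
  (q i₀ ((fun e' => kerRun q x t e'.1), x i₀)).2

open Classical in
noncomputable def funOf (i₀ : Fin n) (q : ∀ i, QT E s i) : (Fin n → Bool) → Bool :=
  fun x => if h : ∃ b, ∃ T, ∀ t, T ≤ t → kerOut i₀ q x t = b then h.choose else false

lemma funOf_eq (i₀ : Fin n) (q : ∀ i, QT E s i) (x : Fin n → Bool) (b : Bool)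
    (hb : ∃ T, ∀ t, T ≤ t → kerOut i₀ q x t = b) : funOf i₀ q x = b := by
  have h : ∃ b, ∃ T, ∀ t, T ≤ t → kerOut i₀ q x t = b := ⟨b, hb⟩
  rw [funOf, dif_pos h]
  obtain ⟨T1, hT1⟩ := h.choose_spec
  obtain ⟨T2, hT2⟩ := hb
  rw [← hT1 (max T1 T2) (le_max_left _ _), hT2 (max T1 T2) (le_max_right _ _)]

/-- extend a labeling of the incoming edges of `i` to all edges by zero -/
def extLab (i : Fin n) (v : inT E i → Fin (s+1)) : {e // e ∈ E} → Fin (s+1) :=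
  fun e => if h : e.1.2 = i then v ⟨e, h⟩ else 0

/-- the local kernel of a protocol -/
def ker (P : StatelessProtocol n E (Fin (s+1))) : ∀ i, QT E s i := fun i vx =>
  ((fun e' => (P.react i (extLab i vx.1) vx.2).1 e'.1),
    (P.react i (extLab i vx.1) vx.2).2)

lemma ker_react (P : StatelessProtocol n E (Fin (s+1))) (i : Fin n)
    (ℓ : {e // e ∈ E} → Fin (s+1)) (x : Bool) :
    P.react i (extLab i (fun e' : inT E i => ℓ e'.1)) x = P.react i ℓ x :=
  P.react_local i _ _ x (fun e he => by simp [extLab, he])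

lemma kerRun_eq (P : StatelessProtocol n E (Fin (s+1))) (x : Fin n → Bool) (t : ℕ) :
    kerRun (ker P) x t = P.syncRun x (fun _ => 0) t := by
  induction t with
  | zero => rfl
  | succ t ih =>
    funext e
    show (P.react e.1.1 (extLab e.1.1 (fun e' : inT E e.1.1 => kerRun (ker P) x t e'.1))
        (x e.1.1)).1 e = _
    rw [ker_react, ih, syncRun_succ]

lemma kerOut_eq (P : StatelessProtocol n E (Fin (s+1))) (i₀ : Fin n) (x : Fin n → Bool)
    (t : ℕ) : kerOut i₀ (ker P) x t = P.syncOut x (fun _ => 0) (t+1) i₀ := by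
  show (P.react i₀ (extLab i₀ (fun e' : inT E i₀ => kerRun (ker P) x t e'.1)) (x i₀)).2 = _
  rw [ker_react, kerRun_eq]
  rfl

lemma funOf_ker (P : StatelessProtocol n E (Fin (s+1))) (i₀ : Fin n)
    (f : (Fin n → Bool) → Bool) (hP : P.Computes f) : funOf i₀ (ker P) = f := by
  funext x
  obtain ⟨T, hT⟩ := hP x (fun _ => 0)
  exact funOf_eq i₀ (ker P) x (f x)
    ⟨T, fun t ht => by rw [kerOut_eq]; exact hT (t+1) (by omega) i₀⟩

end Kernel

section Count

variable {n : ℕ} {E : Finset (Fin n × Fin n)}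

lemma card_inT_le {k : ℕ} (i : Fin n) (h : (E.filter (fun e => e.2 = i)).card ≤ k) :
    Fintype.card (inT E i) ≤ k := by
  have hinj : Function.Injective
      (fun e : inT E i => (⟨e.1.1, by
        simp only [Finset.mem_filter]
        exact ⟨e.1.2, e.2⟩⟩ : {a // a ∈ E.filter (fun e => e.2 = i)})) := by
    intro a b hab
    simp only [Subtype.mk.injEq] at hab
    exact Subtype.ext (Subtype.ext hab)
  have := Fintype.card_le_of_injective _ hinj
  rw [Fintype.card_coe] at this
  omega

lemma card_outT_le {k : ℕ} (i : Fin n) (h : (E.filter (fun e => e.1 = i)).card ≤ k) :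
    Fintype.card (outT E i) ≤ k := by
  have hinj : Function.Injective
      (fun e : outT E i => (⟨e.1.1, by
        simp only [Finset.mem_filter]
        exact ⟨e.1.2, e.2⟩⟩ : {a // a ∈ E.filter (fun e => e.1 = i)})) := by
    intro a b hab
    simp only [Subtype.mk.injEq] at hab
    exact Subtype.ext (Subtype.ext hab)
  have := Fintype.card_le_of_injective _ hinj
  rw [Fintype.card_coe] at this
  omega

lemma card_QT_le {k s : ℕ} (i : Fin n) (hin : Fintype.card (inT E i) ≤ k)
    (hout : Fintype.card (outT E i) ≤ k) :
    Fintype.card (QT E s i) ≤ (2*(s+1)^k)^(2*(s+1)^k) := by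
  classical
  rw [Fintype.card_fun, Fintype.card_prod, Fintype.card_prod, Fintype.card_fun,
    Fintype.card_fun, Fintype.card_bool, Fintype.card_fin]
  have h1 : (s+1)^(Fintype.card (outT E i)) * 2 ≤ 2*(s+1)^k := by
    rw [mul_comm]
    exact Nat.mul_le_mul_left _ (Nat.pow_le_pow_right (by omega) hout)
  have h2 : (s+1)^(Fintype.card (inT E i)) * 2 ≤ 2*(s+1)^k := by
    rw [mul_comm]
    exact Nat.mul_le_mul_left _ (Nat.pow_le_pow_right (by omega) hin)
  calc ((s+1)^(Fintype.card (outT E i)) * 2) ^ ((s+1)^(Fintype.card (inT E i)) * 2)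
      ≤ (2*(s+1)^k) ^ ((s+1)^(Fintype.card (inT E i)) * 2) := Nat.pow_le_pow_left h1 _
    _ ≤ (2*(s+1)^k) ^ (2*(s+1)^k) := Nat.pow_le_pow_right (by positivity) h2

end Count


open StatelessProtocol in
/-- On any directed graph on `n > 8` nodes with in-degree and
out-degree at most `k`, some Boolean function requires label complexity
`log₂|Σ| ≥ n / (4k)` from every output-stabilizing stateless protocol computing
it. -/
theorem exists_hard_function (n k : ℕ) (hk : 1 ≤ k) (hn : 8 < n)
    (E : Finset (Fin n × Fin n))
    (hdeg : ∀ i : Fin n, (E.filter (fun e => e.1 = i)).card ≤ k ∧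
      (E.filter (fun e => e.2 = i)).card ≤ k) :
    ∃ f : (Fin n → Bool) → Bool,
      ∀ (Λ : Type) [Fintype Λ] [Nonempty Λ] (P : StatelessProtocol n E Λ),
        P.OutputStabilizing → P.Computes f →
        (n : ℝ) / (4 * k) ≤ Real.logb 2 (Fintype.card Λ) := by
  classical
  have hn9 : 9 ≤ n := hn
  set i₀ : Fin n := ⟨0, by omega⟩ with hi₀
  set g : ∀ s : ℕ, Finset ((Fin n → Bool) → Bool) := fun s =>
    Finset.image (fun q : ∀ i, QT E s i => funOf i₀ q) Finset.univ with hg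
  set S : Finset ℕ := (Finset.range (2^n)).filter (fun s => (s+1)^(4*k) < 2^n) with hS
  set C : Finset ((Fin n → Bool) → Bool) := S.biUnion g with hC
  -- cardinality bound
  have hterm : ∀ s ∈ S, (g s).card ≤ 2^(2^n - n) - 1 := by
    intro s hs
    have hs4 : (s+1)^(4*k) < 2^n := (Finset.mem_filter.mp hs).2
    have hcard1 : (g s).card ≤ Fintype.card (∀ i, QT E s i) := by
      rw [hg]
      exact le_trans (Finset.card_image_le) (le_of_eq (Finset.card_univ))
    have hcard2 : Fintype.card (∀ i, QT E s i) ≤ (2*(s+1)^k)^(2*(s+1)^k*n) := by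
      rw [Fintype.card_pi]
      calc (Finset.univ.prod fun i => Fintype.card (QT E s i))
          ≤ Finset.univ.prod (fun _ : Fin n => (2*(s+1)^k)^(2*(s+1)^k)) :=
            Finset.prod_le_prod (fun _ _ => Nat.zero_le _)
              (fun i _ => card_QT_le i (card_inT_le i (hdeg i).2) (card_outT_le i (hdeg i).1))
        _ = ((2*(s+1)^k)^(2*(s+1)^k))^n := by
            rw [Finset.prod_const, Finset.card_univ, Fintype.card_fin]
        _ = (2*(s+1)^k)^(2*(s+1)^k*n) := by rw [← pow_mul]
    have ha4 : ((s+1)^k)^4 < 2^n := by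
      rw [← pow_mul]
      rw [show k*4 = 4*k by ring]
      exact hs4
    have hnum := num_bound hn9 (Nat.one_le_pow _ _ (by omega)) ha4
    omega
  have hScard : S.card ≤ 2^n := le_trans (Finset.card_filter_le _ _) (by rw [Finset.card_range])
  have hCcard : C.card < 2^(2^n) := by
    calc C.card ≤ S.sum (fun s => (g s).card) := Finset.card_biUnion_le
      _ ≤ S.card * (2^(2^n - n) - 1) := Finset.sum_le_card_nsmul _ _ _ hterm
      _ ≤ 2^n * (2^(2^n - n) - 1) := Nat.mul_le_mul_right _ hScard
      _ < 2^n * 2^(2^n - n) := by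
          have h1 : (1:ℕ) ≤ 2^(2^n - n) := Nat.one_le_pow _ _ (by norm_num)
          exact (Nat.mul_lt_mul_left (Nat.pow_pos (by norm_num))).2 (by omega)
      _ = 2^(2^n) := by
          rw [← pow_add]
          congr 1
          have : n ≤ 2^n := Nat.le_of_lt (Nat.lt_two_pow_self)
          omega
  -- pick a function outside C
  have hfull : Fintype.card ((Fin n → Bool) → Bool) = 2^(2^n) := by
    rw [Fintype.card_fun, Fintype.card_bool, Fintype.card_fun, Fintype.card_bool,
      Fintype.card_fin]
  obtain ⟨f, hf⟩ : ∃ f, f ∉ C := by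
    by_contra h
    push_neg at h
    have hsub : (Finset.univ : Finset ((Fin n → Bool) → Bool)) ⊆ C := fun f _ => h f
    have := Finset.card_le_card hsub
    rw [Finset.card_univ, hfull] at this
    omega
  refine ⟨f, ?_⟩
  intro Λ _ _ P hstab hcomp
  by_contra hlt
  push_neg at hlt
  -- from the log bound, get (card Λ)^(4k) < 2^n
  set m := Fintype.card Λ with hm
  have hm1 : 1 ≤ m := Fintype.card_pos
  have hk0 : (0:ℝ) < 4 * k := by positivity
  have hstep : (4*k : ℝ) * Real.logb 2 m < n := by
    have := (lt_div_iff₀ hk0).mp hlt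
    linarith
  have hlogpow : Real.logb 2 ((m:ℝ)^(4*k)) < Real.logb 2 ((2:ℝ)^n) := by
    rw [Real.logb_pow, Real.logb_pow, Real.logb_self_eq_one (by norm_num)]
    push_cast
    simpa using hstep
  have hRlt : ((m:ℝ))^(4*k) < (2:ℝ)^n := by
    have hx : (0:ℝ) < (m:ℝ)^(4*k) := by positivity
    have hy : (0:ℝ) < (2:ℝ)^n := by positivity
    exact (Real.logb_lt_logb_iff (b := 2) (hb := by norm_num) hx hy).mp hlogpow
  have hnat : m^(4*k) < 2^n := by exact_mod_cast hRlt
  obtain ⟨s, hms⟩ : ∃ s, m = s + 1 := ⟨m - 1, by omega⟩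
  rw [hms] at hnat
  -- transport the protocol to alphabet Fin (s+1)
  let eqv : Λ ≃ Fin (s+1) := (Fintype.equivFin Λ).trans (finCongr hms)
  let P' : StatelessProtocol n E (Fin (s+1)) := mapProtocol eqv P
  have hP' : P'.Computes f := mapProtocol_computes eqv P f hcomp
  have hfC : f ∈ C := by
    rw [hC]
    apply Finset.mem_biUnion.mpr
    refine ⟨s, ?_, ?_⟩
    · rw [hS, Finset.mem_filter, Finset.mem_range]
      constructor
      · have h1 : s + 1 ≤ (s+1)^(4*k) := Nat.le_self_pow (by omega) _
        omega
      · omega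
    · rw [hg]
      exact Finset.mem_image.mpr ⟨ker P', Finset.mem_univ _, funOf_ker P' i₀ f hP'⟩
  exact hf hfC
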